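/- arXiv:2112.07016 — 3 statements merged into one kernel-verified Lean document; each statement's English description precedes it below -/
import Mathlib

section
/- (Primal recovery from the dual solution.) Let ŷ ∈ ℝ^d, let V ∈ ℝ^{d×d} be symmetric positive definite, let E ∈ ℝ^{k×d}, and let γ ≥ 0. Suppose v* minimizes the dual objective g(v) = ½ (ŷ − Eᵀv)ᵀ V⁻¹ (ŷ − Eᵀv) over the box B = {v ∈ ℝ^k : maxᵢ|vᵢ| ≤ γ}. Then z* = V⁻¹(ŷ − Eᵀv*) is a global minimizer over ℝ^d of the primal objective −ŷᵀz + ½ zᵀVz + γ‖Ez‖₁. -/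
open Matrix

/-- Primal recovery from the dual solution: if `v*` minimizes the dual objective
`g(v) = ½ (ŷ − Eᵀv)ᵀ V⁻¹ (ŷ − Eᵀv)` over the box `{v : ‖v‖_∞ ≤ γ}`, then
`z* = V⁻¹(ŷ − Eᵀv*)` is a global minimizer of the primal objective
`−ŷᵀz + ½ zᵀVz + γ‖Ez‖₁` over `ℝ^d`. -/
theorem stmt7 (d k : ℕ) (yhat : Fin d → ℝ)
    (V : Matrix (Fin d) (Fin d) ℝ) (hV : V.PosDef)
    (E : Matrix (Fin k) (Fin d) ℝ) (γ : ℝ) (hγ : 0 ≤ γ)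
    (vstar : Fin k → ℝ) (hbox : ∀ i, |vstar i| ≤ γ)
    (hmin : ∀ v : Fin k → ℝ, (∀ i, |v i| ≤ γ) →
      (1 / 2) * ((yhat - Eᵀ.mulVec vstar) ⬝ᵥ V⁻¹.mulVec (yhat - Eᵀ.mulVec vstar)) ≤
        (1 / 2) * ((yhat - Eᵀ.mulVec v) ⬝ᵥ V⁻¹.mulVec (yhat - Eᵀ.mulVec v))) :
    ∀ z : Fin d → ℝ,
      -(yhat ⬝ᵥ V⁻¹.mulVec (yhat - Eᵀ.mulVec vstar)) +
          (1 / 2) * (V⁻¹.mulVec (yhat - Eᵀ.mulVec vstar) ⬝ᵥ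
            V.mulVec (V⁻¹.mulVec (yhat - Eᵀ.mulVec vstar))) +
          γ * ∑ i, |(E.mulVec (V⁻¹.mulVec (yhat - Eᵀ.mulVec vstar))) i| ≤
        -(yhat ⬝ᵥ z) + (1 / 2) * (z ⬝ᵥ V.mulVec z) + γ * ∑ i, |(E.mulVec z) i| := by
  intro z
  set w : Fin d → ℝ := yhat - Eᵀ.mulVec vstar with hw
  set zs : Fin d → ℝ := V⁻¹.mulVec w with hzs
  -- symmetry facts
  have hVT : Vᵀ = V := by
    have := hV.isHermitian.eq
    simpa [Matrix.conjTranspose_eq_transpose_of_trivial] using this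
  have hVinvT : (V⁻¹)ᵀ = V⁻¹ := by
    have := hV.inv.isHermitian.eq
    simpa [Matrix.conjTranspose_eq_transpose_of_trivial] using this
  have hVsym : ∀ x y : Fin d → ℝ, x ⬝ᵥ V.mulVec y = y ⬝ᵥ V.mulVec x := by
    intro x y
    rw [Matrix.dotProduct_mulVec, ← Matrix.mulVec_transpose, hVT, dotProduct_comm]
  have hVinvsym : ∀ x y : Fin d → ℝ, x ⬝ᵥ V⁻¹.mulVec y = y ⬝ᵥ V⁻¹.mulVec x := by
    intro x y
    rw [Matrix.dotProduct_mulVec, ← Matrix.mulVec_transpose, hVinvT, dotProduct_comm]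
  have hVz : V.mulVec zs = w := by
    rw [hzs, Matrix.mulVec_mulVec, Matrix.mul_nonsing_inv _ (isUnit_iff_isUnit_det _ |>.1 hV.isUnit),
      Matrix.one_mulVec]
  have hpos : ∀ x : Fin d → ℝ, 0 ≤ x ⬝ᵥ V.mulVec x := fun x => by
    simpa using hV.posSemidef.dotProduct_mulVec_nonneg x
  have hposinv : ∀ x : Fin d → ℝ, 0 ≤ x ⬝ᵥ V⁻¹.mulVec x := fun x => by
    simpa using hV.inv.posSemidef.dotProduct_mulVec_nonneg x
  have hadj : ∀ (u : Fin k → ℝ) (x : Fin d → ℝ),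
      (Eᵀ.mulVec u) ⬝ᵥ x = u ⬝ᵥ (E.mulVec x) := by
    intro u x
    rw [Matrix.mulVec_transpose, ← Matrix.dotProduct_mulVec]
  -- variational inequality from dual optimality
  have hvari : ∀ v : Fin k → ℝ, (∀ i, |v i| ≤ γ) →
      v ⬝ᵥ E.mulVec zs ≤ vstar ⬝ᵥ E.mulVec zs := by
    intro v hv
    set u : Fin k → ℝ := v - vstar with hu
    set a : ℝ := u ⬝ᵥ E.mulVec zs with ha
    set q : ℝ := (Eᵀ.mulVec u) ⬝ᵥ V⁻¹.mulVec (Eᵀ.mulVec u) with hq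
    have hq0 : 0 ≤ q := hposinv _
    have key : ∀ t : ℝ, 0 < t → t ≤ 1 → t * a ≤ t ^ 2 * q / 2 := by
      intro t ht ht1
      have hvt : ∀ i, |(vstar + t • u) i| ≤ γ := by
        intro i
        have : (vstar + t • u) i = (1 - t) * vstar i + t * v i := by
          simp [hu]; ring
        rw [this]
        calc |(1 - t) * vstar i + t * v i| ≤ |(1 - t) * vstar i| + |t * v i| := abs_add_le _ _
          _ = (1 - t) * |vstar i| + t * |v i| := by
              rw [abs_mul, abs_mul, abs_of_nonneg (by linarith), abs_of_nonneg ht.le]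
          _ ≤ (1 - t) * γ + t * γ := by
              have := hbox i; have := hv i
              have h1 : (1 - t) * |vstar i| ≤ (1 - t) * γ := by
                apply mul_le_mul_of_nonneg_left (hbox i) (by linarith)
              have h2 : t * |v i| ≤ t * γ := mul_le_mul_of_nonneg_left (hv i) ht.le
              linarith
          _ = γ := by ring
      have hmin' := hmin _ hvt
      have hexp : yhat - Eᵀ.mulVec (vstar + t • u) = w - t • Eᵀ.mulVec u := by
        rw [hw, Matrix.mulVec_add, Matrix.mulVec_smul]
        abel
      have h1 : (Eᵀ.mulVec u) ⬝ᵥ V⁻¹.mulVec w = a := by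
        rw [← hzs, hadj, ha]
      have h2 : w ⬝ᵥ V⁻¹.mulVec (Eᵀ.mulVec u) = a := by
        rw [hVinvsym, h1]
      have hsq : ∀ p : Fin d → ℝ, p ⬝ᵥ V⁻¹.mulVec w = a → w ⬝ᵥ V⁻¹.mulVec p = a →
          p ⬝ᵥ V⁻¹.mulVec p = q →
          (w - t • p) ⬝ᵥ V⁻¹.mulVec (w - t • p)
            = w ⬝ᵥ V⁻¹.mulVec w - 2 * t * a + t ^ 2 * q := by
        intro p hp1 hp2 hp3
        rw [Matrix.mulVec_sub, Matrix.mulVec_smul]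
        simp only [sub_dotProduct, dotProduct_sub, smul_dotProduct,
          dotProduct_smul, smul_eq_mul, hp1, hp2, hp3]
        ring
      rw [hexp, hsq (Eᵀ.mulVec u) h1 h2 hq.symm, ← hzs] at hmin'
      linarith
    -- conclude a ≤ 0
    have haneg : a ≤ 0 := by
      by_contra hcon
      push_neg at hcon
      rcases eq_or_lt_of_le hq0 with hq' | hq'
      · have := key 1 one_pos le_rfl
        rw [← hq'] at this
        nlinarith
      · have htpos : 0 < min 1 (a / q) := lt_min one_pos (div_pos hcon hq')
        have := key (min 1 (a / q)) htpos (min_le_left _ _)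
        have htq : min 1 (a / q) * q ≤ a := by
          calc min 1 (a / q) * q ≤ (a / q) * q := by
                apply mul_le_mul_of_nonneg_right (min_le_right _ _) hq'.le
            _ = a := by field_simp
        nlinarith [sq_nonneg (min 1 (a/q))]
    have : a = v ⬝ᵥ E.mulVec zs - vstar ⬝ᵥ E.mulVec zs := by
      rw [ha, hu, sub_dotProduct]
    linarith [this ▸ haneg]
  -- complementary slackness
  have hcs : vstar ⬝ᵥ E.mulVec zs = γ * ∑ i, |(E.mulVec zs) i| := by
    apply le_antisymm
    · rw [Finset.mul_sum]
      apply Finset.sum_le_sum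
      intro i _
      calc vstar i * (E.mulVec zs) i ≤ |vstar i * (E.mulVec zs) i| := le_abs_self _
        _ = |vstar i| * |(E.mulVec zs) i| := abs_mul _ _
        _ ≤ γ * |(E.mulVec zs) i| := mul_le_mul_of_nonneg_right (hbox i) (abs_nonneg _)
    · set v' : Fin k → ℝ := fun i => if 0 ≤ (E.mulVec zs) i then γ else -γ with hv'
      have hbox' : ∀ i, |v' i| ≤ γ := by
        intro i
        by_cases h : 0 ≤ (E.mulVec zs) i <;>
          simp [hv', h, abs_of_nonneg hγ]
      have heq : v' ⬝ᵥ E.mulVec zs = γ * ∑ i, |(E.mulVec zs) i| := by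
        rw [Finset.mul_sum]
        apply Finset.sum_congr rfl
        intro i _
        by_cases h : 0 ≤ (E.mulVec zs) i
        · simp [hv', h, abs_of_nonneg h]
        · push_neg at h
          simp [hv', not_le.2 h, abs_of_neg h]
      rw [← heq]
      exact hvari v' hbox'
  -- per-term bound on RHS side
  have hrhs1 : vstar ⬝ᵥ E.mulVec z ≤ γ * ∑ i, |(E.mulVec z) i| := by
    rw [Finset.mul_sum]
    apply Finset.sum_le_sum
    intro i _
    calc vstar i * (E.mulVec z) i ≤ |vstar i * (E.mulVec z) i| := le_abs_self _
      _ = |vstar i| * |(E.mulVec z) i| := abs_mul _ _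
      _ ≤ γ * |(E.mulVec z) i| := mul_le_mul_of_nonneg_right (hbox i) (abs_nonneg _)
  -- decompositions of yhat dot products
  have hyz : ∀ x : Fin d → ℝ, yhat ⬝ᵥ x = w ⬝ᵥ x + vstar ⬝ᵥ E.mulVec x := by
    intro x
    have : yhat = w + Eᵀ.mulVec vstar := by rw [hw]; abel
    rw [this, add_dotProduct, hadj]
  -- quadratic lower bound
  have hquad : 0 ≤ (z - zs) ⬝ᵥ V.mulVec (z - zs) := hpos _
  have hzVzs : z ⬝ᵥ V.mulVec zs = z ⬝ᵥ w := by rw [hVz]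
  have hzsVz : zs ⬝ᵥ V.mulVec z = z ⬝ᵥ w := by rw [hVsym, hVz]
  have hzsVzs : zs ⬝ᵥ V.mulVec zs = w ⬝ᵥ zs := by
    rw [hVz, dotProduct_comm]
  have hexp2 : (z - zs) ⬝ᵥ V.mulVec (z - zs)
      = z ⬝ᵥ V.mulVec z - 2 * (z ⬝ᵥ w) + w ⬝ᵥ zs := by
    rw [Matrix.mulVec_sub]
    simp only [sub_dotProduct, dotProduct_sub, hzVzs, hzsVz, hzsVzs]
    ring
  have hywz : yhat ⬝ᵥ z = w ⬝ᵥ z + vstar ⬝ᵥ E.mulVec z := hyz z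
  have hywzs : yhat ⬝ᵥ zs = w ⬝ᵥ zs + vstar ⬝ᵥ E.mulVec zs := hyz zs
  have hwz : w ⬝ᵥ z = z ⬝ᵥ w := dotProduct_comm _ _
  rw [← hzs, ← hw] at *
  linarith [hquad, hexp2]
end

section
/- (Dual certificate characterization of optimality.) Let ŷ ∈ ℝ^d, let V ∈ ℝ^{d×d} be symmetric positive definite, let E ∈ ℝ^{k×d}, and let γ ≥ 0. A point z* ∈ ℝ^d is a global minimizer of the primal objective −ŷᵀz + ½ zᵀVz + γ‖Ez‖₁ over ℝ^d if and only if there exists v ∈ ℝ^k with maxᵢ|vᵢ| ≤ γ, Vz* = ŷ − Eᵀv, and vᵀ(Ez*) = γ‖Ez*‖₁. -/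
open Matrix Filter

lemma dotT {d k : ℕ} (E : Matrix (Fin k) (Fin d) ℝ) (w : Fin d → ℝ) (v : Fin k → ℝ) :
    w ⬝ᵥ Eᵀ.mulVec v = v ⬝ᵥ E.mulVec w := by
  rw [Matrix.mulVec_transpose, Matrix.dotProduct_mulVec, dotProduct_comm]

lemma symdot {d : ℕ} {V : Matrix (Fin d) (Fin d) ℝ} (hV : V.PosDef) (a b : Fin d → ℝ) :
    a ⬝ᵥ V.mulVec b = b ⬝ᵥ V.mulVec a := by
  have h : Vᵀ = V := hV.1
  rw [Matrix.dotProduct_mulVec, ← Matrix.mulVec_transpose, h, dotProduct_comm]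

/-- Directional optimality inequality at a global minimizer. -/
lemma key_dir (d k : ℕ) (yhat : Fin d → ℝ)
    (V : Matrix (Fin d) (Fin d) ℝ) (hV : V.PosDef)
    (E : Matrix (Fin k) (Fin d) ℝ) (γ : ℝ) (zstar : Fin d → ℝ)
    (hopt : ∀ z : Fin d → ℝ,
      -(yhat ⬝ᵥ zstar) + (1 / 2) * (zstar ⬝ᵥ V.mulVec zstar) +
          γ * ∑ i, |(E.mulVec zstar) i| ≤
        -(yhat ⬝ᵥ z) + (1 / 2) * (z ⬝ᵥ V.mulVec z) + γ * ∑ i, |(E.mulVec z) i|)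
    (h : Fin d → ℝ) :
    (yhat - V.mulVec zstar) ⬝ᵥ h ≤
      γ * ∑ i, (if (E.mulVec zstar) i = 0 then |(E.mulVec h) i|
        else (if (E.mulVec zstar) i < 0 then -1 else 1) * (E.mulVec h) i) := by
  set x := E.mulVec zstar with hxdef
  set u := E.mulVec h with hudef
  set s : Fin k → ℝ := fun i => if x i < 0 then -1 else 1 with hsdef
  set D := ∑ i, (if x i = 0 then |u i| else s i * u i) with hDdef
  set Q := h ⬝ᵥ V.mulVec h with hQdef
  have ev1 : ∀ᶠ t in nhdsWithin (0:ℝ) (Set.Ioi 0), ∀ i, x i ≠ 0 → t * |u i| ≤ |x i| := by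
    rw [eventually_all]
    intro i
    by_cases hxi : x i = 0
    · filter_upwards with t ht; exact absurd hxi ht
    · have hpos : (0:ℝ) < |x i| := abs_pos.mpr hxi
      have htend : Tendsto (fun t : ℝ => t * |u i|) (nhdsWithin 0 (Set.Ioi 0)) (nhds 0) := by
        have : Tendsto (fun t : ℝ => t * |u i|) (nhds 0) (nhds (0 * |u i|)) :=
          (continuous_id.mul continuous_const).tendsto 0
        simpa using this.mono_left nhdsWithin_le_nhds
      filter_upwards [htend.eventually_lt_const hpos] with t ht _
      exact ht.le
  have ev0 : ∀ᶠ t in nhdsWithin (0:ℝ) (Set.Ioi 0), (0:ℝ) < t :=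
    eventually_mem_nhdsWithin
  have ev : ∀ᶠ t in nhdsWithin (0:ℝ) (Set.Ioi 0),
      (yhat - V.mulVec zstar) ⬝ᵥ h ≤ γ * D + t / 2 * Q := by
    filter_upwards [ev0, ev1] with t ht ht1
    have habs : ∀ i, |x i + t * u i| = |x i| + t * (if x i = 0 then |u i| else s i * u i) := by
      intro i
      by_cases hxi : x i = 0
      · simp [hxi, abs_mul, abs_of_pos ht]
      · rcases lt_or_gt_of_ne hxi with hneg | hposx
        · have hsi : s i = -1 := by simp [hsdef, hneg]
          have hb := ht1 i hxi
          have h1 : x i + t * u i ≤ 0 := by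
            have : t * u i ≤ t * |u i| :=
              mul_le_mul_of_nonneg_left (le_abs_self _) ht.le
            have hax : |x i| = -x i := abs_of_neg hneg
            linarith
          rw [abs_of_nonpos h1, abs_of_neg hneg, if_neg hxi, hsi]; ring
        · have hsi : s i = 1 := by simp [hsdef, not_lt.mpr hposx.le]
          have hb := ht1 i hxi
          have h1 : 0 ≤ x i + t * u i := by
            have : -(t * |u i|) ≤ t * u i := by
              have := mul_le_mul_of_nonneg_left (neg_abs_le (u i)) ht.le
              linarith [this]
            have hax : |x i| = x i := abs_of_pos hposx
            linarith
          rw [abs_of_nonneg h1, abs_of_pos hposx, if_neg hxi, hsi]; ring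
    have hz := hopt (zstar + t • h)
    have hsum : ∑ i, |(E.mulVec (zstar + t • h)) i| = (∑ i, |x i|) + t * D := by
      rw [Matrix.mulVec_add, Matrix.mulVec_smul]
      calc ∑ i, |(x + t • u) i| = ∑ i, (|x i| + t * (if x i = 0 then |u i| else s i * u i)) := by
            refine Finset.sum_congr rfl fun i _ => ?_
            simpa using habs i
        _ = (∑ i, |x i|) + t * D := by
            rw [Finset.sum_add_distrib, ← Finset.mul_sum]
    rw [hsum] at hz
    have hquad : (zstar + t • h) ⬝ᵥ V.mulVec (zstar + t • h)
        = zstar ⬝ᵥ V.mulVec zstar + 2 * (t * (h ⬝ᵥ V.mulVec zstar)) + t * t * Q := by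
      rw [Matrix.mulVec_add, Matrix.mulVec_smul]
      simp only [dotProduct_add, add_dotProduct, dotProduct_smul, smul_dotProduct,
        smul_eq_mul, symdot hV zstar h]
      ring
    have hlin : yhat ⬝ᵥ (zstar + t • h) = yhat ⬝ᵥ zstar + t * (yhat ⬝ᵥ h) := by
      simp [dotProduct_add, dotProduct_smul]
    rw [hquad, hlin] at hz
    have hch : (yhat - V.mulVec zstar) ⬝ᵥ h = yhat ⬝ᵥ h - h ⬝ᵥ V.mulVec zstar := by
      rw [sub_dotProduct, dotProduct_comm (V.mulVec zstar)]
    rw [hch]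
    have hmul : t * (yhat ⬝ᵥ h - h ⬝ᵥ V.mulVec zstar) ≤ t * (γ * D + t / 2 * Q) := by
      nlinarith [hz]
    exact le_of_mul_le_mul_left (by linarith [hmul]) ht
  have hten : Tendsto (fun t : ℝ => γ * D + t / 2 * Q) (nhdsWithin (0:ℝ) (Set.Ioi 0))
      (nhds (γ * D)) := by
    have : Tendsto (fun t : ℝ => γ * D + t / 2 * Q) (nhds 0) (nhds (γ * D + 0 / 2 * Q)) :=
      (continuous_const.add ((continuous_id.div_const 2).mul continuous_const)).tendsto 0
    simpa using this.mono_left nhdsWithin_le_nhds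
  exact ge_of_tendsto hten ev

/-- From the directional inequality, a dual certificate exists (separation argument). -/
lemma exists_cert (d k : ℕ) (E : Matrix (Fin k) (Fin d) ℝ) (γ : ℝ) (hγ : 0 ≤ γ)
    (x : Fin k → ℝ) (c : Fin d → ℝ)
    (key : ∀ h : Fin d → ℝ, c ⬝ᵥ h ≤
      γ * ∑ i, (if x i = 0 then |(E.mulVec h) i|
        else (if x i < 0 then -1 else 1) * (E.mulVec h) i)) :
    ∃ v : Fin k → ℝ, (∀ i, |v i| ≤ γ) ∧ Eᵀ.mulVec v = c ∧
      v ⬝ᵥ x = γ * ∑ i, |x i| := by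
  set s : Fin k → ℝ := fun i => if x i < 0 then -1 else 1 with hsdef
  set lo : Fin k → ℝ := fun i => if x i = 0 then -γ else γ * s i with hlodef
  set hi : Fin k → ℝ := fun i => if x i = 0 then γ else γ * s i with hhidef
  set C : Set (Fin k → ℝ) := Set.univ.pi (fun i => Set.Icc (lo i) (hi i)) with hCdef
  have hCconv : Convex ℝ C := convex_pi fun i _ => convex_Icc _ _
  have hCcomp : IsCompact C := isCompact_univ_pi fun i => isCompact_Icc
  set K : Set (Fin d → ℝ) := (fun v => Eᵀ.mulVec v) '' C with hKdef
  have hKconv : Convex ℝ K := hCconv.linear_image (Eᵀ.mulVecLin)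
  have hKcomp : IsCompact K := hCcomp.image (Eᵀ.mulVecLin.continuous_of_finiteDimensional)
  have hcK : c ∈ K := by
    by_contra hc
    obtain ⟨f, uval, hfu, huc⟩ :=
      geometric_hahn_banach_closed_point hKconv hKcomp.isClosed hc
    set hvec : Fin d → ℝ := fun j => f (Pi.single j 1) with hhvec
    have frep : ∀ w : Fin d → ℝ, f w = w ⬝ᵥ hvec := by
      intro w
      have hw : w = ∑ j, w j • (Pi.single j 1 : Fin d → ℝ) := by
        ext i
        simp [Pi.single_apply, Finset.sum_ite_eq']
      conv_lhs => rw [hw]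
      rw [map_sum]
      simp only [_root_.map_smul, smul_eq_mul]
      rfl
    set u : Fin k → ℝ := E.mulVec hvec with hudef
    set vstar : Fin k → ℝ := fun i => if x i = 0 then γ * (if u i < 0 then -1 else 1)
      else γ * s i with hvstar
    have hvC : vstar ∈ C := by
      intro i _
      by_cases hxi : x i = 0
      · constructor <;> by_cases hui : u i < 0 <;>
          simp [hvstar, hlodef, hhidef, hxi, hui] <;> linarith
      · simp [hvstar, hlodef, hhidef, hxi]
    have hmem : Eᵀ.mulVec vstar ∈ K := ⟨vstar, hvC, rfl⟩
    have h1 : f (Eᵀ.mulVec vstar) < uval := hfu _ hmem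
    have h2 : f (Eᵀ.mulVec vstar) = vstar ⬝ᵥ u := by
      rw [frep, dotProduct_comm, dotT]
    have h3 : vstar ⬝ᵥ u = γ * ∑ i, (if x i = 0 then |u i| else s i * u i) := by
      rw [Finset.mul_sum]
      refine Finset.sum_congr rfl fun i _ => ?_
      by_cases hxi : x i = 0
      · rcases lt_or_ge (u i) 0 with hui | hui
        · simp [hvstar, hxi, hui, abs_of_neg hui]
        · simp [hvstar, hxi, not_lt.mpr hui, abs_of_nonneg hui]
      · simp [hvstar, hxi]; ring
    rw [h2, h3] at h1
    have h5 : f c = c ⬝ᵥ hvec := frep c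
    have h6 : c ⬝ᵥ hvec ≤ γ * ∑ i, (if x i = 0 then |u i| else s i * u i) := by
      simpa [hudef, hsdef] using key hvec
    linarith [huc, h5 ▸ huc]
  obtain ⟨v, hvC, hvE⟩ := hcK
  refine ⟨v, ?_, hvE, ?_⟩
  · intro i
    have := hvC i (Set.mem_univ i)
    by_cases hxi : x i = 0
    · simp only [hlodef, hhidef, hxi, if_pos] at this
      exact abs_le.mpr this
    · simp only [hlodef, hhidef, hxi, if_neg, ite_false] at this
      have hvi : v i = γ * s i := le_antisymm this.2 this.1
      rw [hvi, abs_mul, abs_of_nonneg hγ]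
      have : |s i| = 1 := by
        by_cases h : x i < 0 <;> simp [hsdef, h]
      rw [this, mul_one]
  · rw [Finset.mul_sum]
    refine Finset.sum_congr rfl fun i _ => ?_
    by_cases hxi : x i = 0
    · simp [hxi]
    · have := hvC i (Set.mem_univ i)
      simp only [hlodef, hhidef, hxi, ite_false] at this
      have hvi : v i = γ * s i := le_antisymm this.2 this.1
      rcases lt_or_gt_of_ne hxi with hneg | hposx
      · rw [hvi, abs_of_neg hneg]; simp [hsdef, hneg]
      · rw [hvi, abs_of_pos hposx]; simp [hsdef, not_lt.mpr hposx.le]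

/-- Dual certificate characterization of optimality: `z*` is a global minimizer
of `−ŷᵀz + ½ zᵀVz + γ‖Ez‖₁` over `ℝ^d` iff there exists `v` with `‖v‖_∞ ≤ γ`,
`Vz* = ŷ − Eᵀv`, and `vᵀ(Ez*) = γ‖Ez*‖₁`. -/
theorem stmt8 (d k : ℕ) (yhat : Fin d → ℝ)
    (V : Matrix (Fin d) (Fin d) ℝ) (hV : V.PosDef)
    (E : Matrix (Fin k) (Fin d) ℝ) (γ : ℝ) (hγ : 0 ≤ γ) (zstar : Fin d → ℝ) :
    (∀ z : Fin d → ℝ,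
      -(yhat ⬝ᵥ zstar) + (1 / 2) * (zstar ⬝ᵥ V.mulVec zstar) +
          γ * ∑ i, |(E.mulVec zstar) i| ≤
        -(yhat ⬝ᵥ z) + (1 / 2) * (z ⬝ᵥ V.mulVec z) + γ * ∑ i, |(E.mulVec z) i|) ↔
    (∃ v : Fin k → ℝ, (∀ i, |v i| ≤ γ) ∧
      V.mulVec zstar = yhat - Eᵀ.mulVec v ∧
      v ⬝ᵥ E.mulVec zstar = γ * ∑ i, |(E.mulVec zstar) i|) := by
  constructor
  · intro hopt
    obtain ⟨v, hv1, hv2, hv3⟩ := exists_cert d k E γ hγ (E.mulVec zstar)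
      (yhat - V.mulVec zstar) (key_dir d k yhat V hV E γ zstar hopt)
    exact ⟨v, hv1, by rw [hv2]; abel, hv3⟩
  · rintro ⟨v, hvγ, hVz, hvx⟩
    intro z
    have hq : 0 ≤ (z - zstar) ⬝ᵥ V.mulVec (z - zstar) := by
      have := hV.posSemidef.dotProduct_mulVec_nonneg (z - zstar); simpa using this
    have hl1 : v ⬝ᵥ E.mulVec z ≤ γ * ∑ i, |(E.mulVec z) i| := by
      rw [Finset.mul_sum]
      refine Finset.sum_le_sum fun i _ => ?_
      calc v i * (E.mulVec z) i ≤ |v i * (E.mulVec z) i| := le_abs_self _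
        _ = |v i| * |(E.mulVec z) i| := abs_mul _ _
        _ ≤ γ * |(E.mulVec z) i| :=
            mul_le_mul_of_nonneg_right (hvγ i) (abs_nonneg _)
    have hm : z ⬝ᵥ V.mulVec zstar = yhat ⬝ᵥ z - v ⬝ᵥ E.mulVec z := by
      rw [hVz, dotProduct_sub, dotT, dotProduct_comm]
    have hz0 : zstar ⬝ᵥ V.mulVec zstar = yhat ⬝ᵥ zstar - v ⬝ᵥ E.mulVec zstar := by
      rw [hVz, dotProduct_sub, dotT, dotProduct_comm]
    have hqexp : (z - zstar) ⬝ᵥ V.mulVec (z - zstar)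
        = z ⬝ᵥ V.mulVec z - 2 * (z ⬝ᵥ V.mulVec zstar) + zstar ⬝ᵥ V.mulVec zstar := by
      rw [Matrix.mulVec_sub, dotProduct_sub, sub_dotProduct, sub_dotProduct,
        symdot hV zstar z]
      ring
    linarith [hq, hl1, hvx, hm, hz0, hqexp]
end

section
/- (Strong duality for the constrained L1-penalized QP under Slater's condition.) Let ŷ ∈ ℝ^d, let V ∈ ℝ^{d×d} be symmetric positive definite, let E ∈ ℝ^{k×d}, γ ≥ 0, A ∈ ℝ^{p×d}, b ∈ ℝ^p, G ∈ ℝ^{q×d}, h ∈ ℝ^q, and suppose there exists z₀ ∈ ℝ^d with Az₀ = b and Gz₀ < h componentwise (strict inequality in every coordinate). Then the infimum of the primal objective −ŷᵀz + ½ zᵀVz + γ‖Ez‖₁ over the feasible set {z ∈ ℝ^d : Az = b, Gz ≤ h} equals the negative of the infimum of the dual objective ½ rᵀV⁻¹r + ηᵀb + λᵀh, where r = ŷ − Eᵀv − Aᵀη − Gᵀλ, taken over all (v, η, λ) ∈ ℝ^k × ℝ^p × ℝ^q with maxᵢ|vᵢ| ≤ γ and λ ≥ 0 componentwise; moreover both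 infima are attained. -/
open Matrix


lemma sd_dot_transpose {m n : ℕ} (M : Matrix (Fin m) (Fin n) ℝ) (u : Fin m → ℝ) (z : Fin n → ℝ) :
    (Mᵀ.mulVec u) ⬝ᵥ z = u ⬝ᵥ (M.mulVec z) := by
  rw [Matrix.mulVec_transpose]; exact (Matrix.dotProduct_mulVec u M z).symm

lemma sd_dot_symm {n : ℕ} {W : Matrix (Fin n) (Fin n) ℝ} (hWs : Wᵀ = W) (u v : Fin n → ℝ) :
    u ⬝ᵥ W.mulVec v = v ⬝ᵥ W.mulVec u := by
  conv_lhs => rw [← hWs]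
  rw [dotProduct_comm, sd_dot_transpose]

lemma sd_posdef_nonneg {n : ℕ} {W : Matrix (Fin n) (Fin n) ℝ} (hW : W.PosDef)
    (u : Fin n → ℝ) : 0 ≤ u ⬝ᵥ W.mulVec u := by
  by_cases hu : u = 0
  · simp [hu]
  · have := hW.dotProduct_mulVec_pos hu; simp only [star_trivial] at this; exact this.le

lemma sd_posdef_pos {n : ℕ} {W : Matrix (Fin n) (Fin n) ℝ} (hW : W.PosDef)
    {u : Fin n → ℝ} (hu : u ≠ 0) : 0 < u ⬝ᵥ W.mulVec u := by
  have := hW.dotProduct_mulVec_pos hu; simpa using this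

lemma sd_symm {n : ℕ} {W : Matrix (Fin n) (Fin n) ℝ} (hW : W.IsHermitian) : Wᵀ = W := by
  have := hW.eq; simpa using this

lemma sd_continuous_mulVec {a bdim : ℕ} (M : Matrix (Fin a) (Fin bdim) ℝ) :
    Continuous fun v : Fin bdim → ℝ => M.mulVec v := by
  have h := (Matrix.mulVecLin M).continuous_of_finiteDimensional
  exact h

lemma sd_continuous_dot {α : Type*} [TopologicalSpace α] {n : ℕ}
    {f g : α → (Fin n → ℝ)} (hf : Continuous f) (hg : Continuous g) :
    Continuous fun x => f x ⬝ᵥ g x := by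
  simp only [dotProduct]
  exact continuous_finset_sum _ fun i _ =>
    ((continuous_apply i).comp hf).mul ((continuous_apply i).comp hg)

lemma sd_quad_lower {n : ℕ} (W : Matrix (Fin n) (Fin n) ℝ) (hW : W.PosDef) :
    ∃ m : ℝ, 0 < m ∧ ∀ u : Fin n → ℝ, m * ‖u‖ ^ 2 ≤ u ⬝ᵥ W.mulVec u := by
  rcases Nat.eq_zero_or_pos n with hn | hn
  · subst hn
    refine ⟨1, one_pos, fun u => ?_⟩
    have h1 : u ⬝ᵥ W.mulVec u = 0 := by simp [dotProduct]
    have h2 : ‖u‖ = 0 := by rw [show u = 0 from funext fun i => i.elim0, norm_zero]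
    rw [h1, h2]; norm_num
  · have hne : Nonempty (Fin n) := ⟨⟨0, hn⟩⟩
    have hcont : Continuous fun u : Fin n → ℝ => u ⬝ᵥ W.mulVec u :=
      sd_continuous_dot continuous_id (sd_continuous_mulVec W)
    have hsph : IsCompact (Metric.sphere (0 : Fin n → ℝ) 1) := isCompact_sphere 0 1
    have hone : (fun _ => (1 : ℝ) : Fin n → ℝ) ∈ Metric.sphere (0 : Fin n → ℝ) 1 := by
      simp [mem_sphere_iff_norm, pi_norm_const]
    obtain ⟨u₀, hu₀mem, hu₀min⟩ := hsph.exists_isMinOn ⟨_, hone⟩ hcont.continuousOn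
    have hu₀norm : ‖u₀‖ = 1 := by simpa [mem_sphere_iff_norm] using hu₀mem
    have hu₀ne : u₀ ≠ 0 := by
      intro hc; rw [hc] at hu₀norm; simp at hu₀norm
    refine ⟨u₀ ⬝ᵥ W.mulVec u₀, sd_posdef_pos hW hu₀ne, fun u => ?_⟩
    by_cases hu : u = 0
    · simp [hu]
    · have hn0 : (0:ℝ) < ‖u‖ := norm_pos_iff.mpr hu
      set w : Fin n → ℝ := ‖u‖⁻¹ • u with hw
      have hwnorm : ‖w‖ = 1 := by
        rw [hw, norm_smul]
        simp [abs_of_pos (inv_pos.mpr hn0), inv_mul_cancel₀ hn0.ne']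
      have hwle : u₀ ⬝ᵥ W.mulVec u₀ ≤ w ⬝ᵥ W.mulVec w :=
        hu₀min (by simp [mem_sphere_iff_norm, hwnorm])
      have huw : u = ‖u‖ • w := by
        rw [hw, smul_smul, mul_inv_cancel₀ hn0.ne', one_smul]
      have key : u ⬝ᵥ W.mulVec u = ‖u‖ ^ 2 * (w ⬝ᵥ W.mulVec w) := by
        conv_lhs => rw [huw]
        rw [Matrix.mulVec_smul, smul_dotProduct, dotProduct_smul,
          smul_eq_mul, smul_eq_mul]
        ring
      rw [key]
      nlinarith [sq_nonneg ‖u‖]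

lemma sd_fenchel {n : ℕ} (V : Matrix (Fin n) (Fin n) ℝ) (hV : V.PosDef)
    (z r : Fin n → ℝ) :
    r ⬝ᵥ z ≤ (1/2) * (z ⬝ᵥ V.mulVec z) + (1/2) * (r ⬝ᵥ V⁻¹.mulVec r) := by
  have hdet : IsUnit V.det := isUnit_iff_ne_zero.mpr hV.det_pos.ne'
  have hVVinv : V * V⁻¹ = 1 := Matrix.mul_nonsing_inv V hdet
  have hVinvV : V⁻¹ * V = 1 := Matrix.nonsing_inv_mul V hdet
  have hVs : Vᵀ = V := sd_symm hV.1
  have hWs : (V⁻¹)ᵀ = V⁻¹ := sd_symm hV.inv.1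
  have hVu : V.mulVec (V⁻¹.mulVec r) = r := by
    rw [Matrix.mulVec_mulVec, hVVinv, Matrix.one_mulVec]
  have h0 : 0 ≤ (z - V⁻¹.mulVec r) ⬝ᵥ V.mulVec (z - V⁻¹.mulVec r) := sd_posdef_nonneg hV _
  have hexp : (z - V⁻¹.mulVec r) ⬝ᵥ V.mulVec (z - V⁻¹.mulVec r)
      = z ⬝ᵥ V.mulVec z - z ⬝ᵥ r - r ⬝ᵥ z + r ⬝ᵥ V⁻¹.mulVec r := by
    rw [Matrix.mulVec_sub, dotProduct_sub, sub_dotProduct,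
      sub_dotProduct, hVu]
    have h1 : (V⁻¹.mulVec r) ⬝ᵥ r = r ⬝ᵥ V⁻¹.mulVec r := dotProduct_comm _ _
    have h2 : (V⁻¹.mulVec r) ⬝ᵥ V.mulVec z = r ⬝ᵥ z := by
      rw [sd_dot_symm hVs, hVu, dotProduct_comm]
    rw [h1, h2]
    ring
  have h3 : z ⬝ᵥ r = r ⬝ᵥ z := dotProduct_comm _ _
  rw [hexp, h3] at h0
  linarith

lemma sd_oneSided (L Q ε : ℝ) (hQ : 0 ≤ Q) (hε : 0 < ε)
    (H : ∀ t : ℝ, 0 < t → t ≤ ε → 0 ≤ t * L + t ^ 2 * Q) : 0 ≤ L := by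
  by_contra hc
  push_neg at hc
  set t : ℝ := min ε (-L / (2 * Q + 1)) with ht
  have h2Q : (0:ℝ) < 2 * Q + 1 := by linarith
  have ht0 : 0 < t := lt_min hε (div_pos (by linarith) h2Q)
  have htε : t ≤ ε := min_le_left _ _
  have htL : t ≤ -L / (2 * Q + 1) := min_le_right _ _
  have h1 := H t ht0 htε
  have h2 : t * (2 * Q + 1) ≤ -L := (le_div_iff₀ h2Q).mp htL
  nlinarith [mul_pos ht0 ht0]

lemma sd_tbound (m t Z B₁ : ℝ) (hm : 0 < m) (ht : 0 ≤ t) (hZ : 0 ≤ Z)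
    (H : m * t ^ 2 ≤ 2 * B₁ + 2 * Z * t) : t ≤ (2 * Z + m + 2 * |B₁|) / m := by
  by_contra hc
  push_neg at hc
  have h1 : 2 * Z + m + 2 * |B₁| < t * m := (div_lt_iff₀ hm).mp hc
  have hB : B₁ ≤ |B₁| := le_abs_self B₁
  have hB0 : 0 ≤ |B₁| := abs_nonneg B₁
  have ht1 : 1 ≤ t := by nlinarith
  nlinarith [mul_lt_mul_of_pos_right h1 (lt_of_lt_of_le one_pos ht1)]

noncomputable def sdR (d k q : ℕ) (yhat : Fin d → ℝ) (E : Matrix (Fin k) (Fin d) ℝ)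
    (G : Matrix (Fin q) (Fin d) ℝ) (x : (Fin k → ℝ) × (Fin d → ℝ) × (Fin q → ℝ)) :
    Fin d → ℝ :=
  yhat - Eᵀ.mulVec x.1 - x.2.1 - Gᵀ.mulVec x.2.2

noncomputable def sdR0 (d k q : ℕ) (E : Matrix (Fin k) (Fin d) ℝ)
    (G : Matrix (Fin q) (Fin d) ℝ) (w : (Fin k → ℝ) × (Fin d → ℝ) × (Fin q → ℝ)) :
    Fin d → ℝ :=
  -(Eᵀ.mulVec w.1) - w.2.1 - Gᵀ.mulVec w.2.2

noncomputable def sdG (d k q : ℕ) (yhat : Fin d → ℝ) (E : Matrix (Fin k) (Fin d) ℝ)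
    (G : Matrix (Fin q) (Fin d) ℝ) (W : Matrix (Fin d) (Fin d) ℝ) (z₀ : Fin d → ℝ)
    (h : Fin q → ℝ) (x : (Fin k → ℝ) × (Fin d → ℝ) × (Fin q → ℝ)) : ℝ :=
  (1/2) * (sdR d k q yhat E G x ⬝ᵥ W.mulVec (sdR d k q yhat E G x)) +
    x.2.1 ⬝ᵥ z₀ + x.2.2 ⬝ᵥ h

lemma sdR_add_smul (d k q : ℕ) (yhat : Fin d → ℝ) (E : Matrix (Fin k) (Fin d) ℝ)
    (G : Matrix (Fin q) (Fin d) ℝ) (x w : (Fin k → ℝ) × (Fin d → ℝ) × (Fin q → ℝ)) (t : ℝ) :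
    sdR d k q yhat E G (x + t • w) = sdR d k q yhat E G x + t • sdR0 d k q E G w := by
  funext i
  simp only [sdR, sdR0, Prod.fst_add, Prod.snd_add, Prod.smul_fst, Prod.smul_snd,
    Matrix.mulVec_add, Matrix.mulVec_smul, Pi.add_apply, Pi.sub_apply, Pi.smul_apply,
    Pi.neg_apply, smul_eq_mul]
  ring

lemma sdG_expand (d k q : ℕ) (yhat : Fin d → ℝ) (E : Matrix (Fin k) (Fin d) ℝ)
    (G : Matrix (Fin q) (Fin d) ℝ) (W : Matrix (Fin d) (Fin d) ℝ) (hWs : Wᵀ = W)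
    (z₀ : Fin d → ℝ) (h : Fin q → ℝ)
    (x w : (Fin k → ℝ) × (Fin d → ℝ) × (Fin q → ℝ)) (t : ℝ) :
    sdG d k q yhat E G W z₀ h (x + t • w) = sdG d k q yhat E G W z₀ h x
      + t * ((W.mulVec (sdR d k q yhat E G x)) ⬝ᵥ sdR0 d k q E G w
          + w.2.1 ⬝ᵥ z₀ + w.2.2 ⬝ᵥ h)
      + t ^ 2 * ((1/2) * (sdR0 d k q E G w ⬝ᵥ W.mulVec (sdR0 d k q E G w))) := by
  simp only [sdG, sdR_add_smul d k q yhat E G x w t, Prod.fst_add, Prod.snd_add,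
    Prod.smul_fst, Prod.smul_snd]
  set a := sdR d k q yhat E G x
  set c := sdR0 d k q E G w
  have hcross : c ⬝ᵥ W.mulVec a = a ⬝ᵥ W.mulVec c := sd_dot_symm hWs c a
  have hL : (W.mulVec a) ⬝ᵥ c = a ⬝ᵥ W.mulVec c := by
    conv_lhs => rw [← hWs]
    rw [sd_dot_transpose]
  simp only [Matrix.mulVec_add, Matrix.mulVec_smul, dotProduct_add,
    add_dotProduct, dotProduct_smul, smul_dotProduct, smul_eq_mul]
  rw [hL, hcross]
  ring

lemma sdG_continuous (d k q : ℕ) (yhat : Fin d → ℝ) (E : Matrix (Fin k) (Fin d) ℝ)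
    (G : Matrix (Fin q) (Fin d) ℝ) (W : Matrix (Fin d) (Fin d) ℝ) (z₀ : Fin d → ℝ)
    (h : Fin q → ℝ) : Continuous (sdG d k q yhat E G W z₀ h) := by
  have hR : Continuous (sdR d k q yhat E G) := by
    unfold sdR
    refine ((continuous_const.sub ?_).sub ?_).sub ?_
    · exact (sd_continuous_mulVec Eᵀ).comp continuous_fst
    · exact continuous_fst.comp continuous_snd
    · exact (sd_continuous_mulVec Gᵀ).comp (continuous_snd.comp continuous_snd)
  unfold sdG
  refine ((continuous_const.mul (sd_continuous_dot hR
    ((sd_continuous_mulVec W).comp hR))).add (sd_continuous_dot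
      (continuous_fst.comp continuous_snd) continuous_const)).add
    (sd_continuous_dot (continuous_snd.comp continuous_snd) continuous_const)

def sdS (k dd q p : ℕ) (γ : ℝ) (A : Matrix (Fin p) (Fin dd) ℝ) :
    Set ((Fin k → ℝ) × (Fin dd → ℝ) × (Fin q → ℝ)) :=
  {x | (∀ i, |x.1 i| ≤ γ) ∧ x.2.1 ∈ LinearMap.range (Matrix.mulVecLin Aᵀ) ∧ ∀ j, 0 ≤ x.2.2 j}

lemma sdG_alt (d k q : ℕ) (yhat : Fin d → ℝ) (E : Matrix (Fin k) (Fin d) ℝ)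
    (G : Matrix (Fin q) (Fin d) ℝ) (W : Matrix (Fin d) (Fin d) ℝ) (z₀ : Fin d → ℝ)
    (h : Fin q → ℝ) (x : (Fin k → ℝ) × (Fin d → ℝ) × (Fin q → ℝ)) :
    sdG d k q yhat E G W z₀ h x
      = (1/2) * (sdR d k q yhat E G x ⬝ᵥ W.mulVec (sdR d k q yhat E G x))
        - sdR d k q yhat E G x ⬝ᵥ z₀ + yhat ⬝ᵥ z₀ - x.1 ⬝ᵥ (E.mulVec z₀)
        + x.2.2 ⬝ᵥ (h - G.mulVec z₀) := by
  have hdz : sdR d k q yhat E G x ⬝ᵥ z₀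
      = yhat ⬝ᵥ z₀ - x.1 ⬝ᵥ (E.mulVec z₀) - x.2.1 ⬝ᵥ z₀ - x.2.2 ⬝ᵥ (G.mulVec z₀) := by
    unfold sdR
    rw [sub_dotProduct, sub_dotProduct, sub_dotProduct,
      sd_dot_transpose, sd_dot_transpose]
  have hlh : x.2.2 ⬝ᵥ (h - G.mulVec z₀) = x.2.2 ⬝ᵥ h - x.2.2 ⬝ᵥ (G.mulVec z₀) :=
    dotProduct_sub _ _ _
  unfold sdG
  rw [hdz, hlh]
  ring

lemma sd_dot_le_abs_sum {k : ℕ} (γ : ℝ) (v : Fin k → ℝ) (hv : ∀ i, |v i| ≤ γ)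
    (w : Fin k → ℝ) : v ⬝ᵥ w ≤ γ * ∑ i, |w i| := by
  rw [Finset.mul_sum]
  refine Finset.sum_le_sum fun i _ => ?_
  calc v i * w i ≤ |v i * w i| := le_abs_self _
    _ = |v i| * |w i| := abs_mul _ _
    _ ≤ γ * |w i| := mul_le_mul_of_nonneg_right (hv i) (abs_nonneg _)

lemma sd_exists_min (d k p q : ℕ) (yhat : Fin d → ℝ) (V : Matrix (Fin d) (Fin d) ℝ)
    (hV : V.PosDef) (E : Matrix (Fin k) (Fin d) ℝ) (γ : ℝ) (hγ : 0 ≤ γ)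
    (A : Matrix (Fin p) (Fin d) ℝ) (G : Matrix (Fin q) (Fin d) ℝ) (h : Fin q → ℝ)
    (z₀ : Fin d → ℝ) (hGz₀ : ∀ j, (G.mulVec z₀) j < h j) :
    ∃ xs ∈ sdS k d q p γ A, ∀ x ∈ sdS k d q p γ A,
      sdG d k q yhat E G V⁻¹ z₀ h xs ≤ sdG d k q yhat E G V⁻¹ z₀ h x := by
  classical
  have hW : (V⁻¹).PosDef := hV.inv
  obtain ⟨m, hm, hmW⟩ := sd_quad_lower V⁻¹ hW
  set gf := sdG d k q yhat E G V⁻¹ z₀ h with hgf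
  set x₀ : (Fin k → ℝ) × (Fin d → ℝ) × (Fin q → ℝ) := (0, 0, 0) with hx₀
  have hx₀S : x₀ ∈ sdS k d q p γ A := by
    refine ⟨fun i => ?_, Submodule.zero_mem _, fun j => le_refl 0⟩
    simp [hx₀, hγ]
  have hcont : Continuous gf := sdG_continuous d k q yhat E G V⁻¹ z₀ h
  set B := gf x₀ with hB
  set T : Set ((Fin k → ℝ) × (Fin d → ℝ) × (Fin q → ℝ)) :=
    sdS k d q p γ A ∩ {x | gf x ≤ B} with hT
  -- estimates
  set Mc := γ * ∑ i, |(E.mulVec z₀) i| with hMc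
  have hfen : ∀ r : Fin d → ℝ,
      -((1/2) * (z₀ ⬝ᵥ V.mulVec z₀)) ≤ (1/2) * (r ⬝ᵥ V⁻¹.mulVec r) - r ⬝ᵥ z₀ := by
    intro r; have := sd_fenchel V hV z₀ r; linarith
  have hlow : ∀ x ∈ sdS k d q p γ A,
      (-((1/2) * (z₀ ⬝ᵥ V.mulVec z₀)) + yhat ⬝ᵥ z₀ - Mc) + x.2.2 ⬝ᵥ (h - G.mulVec z₀)
        ≤ gf x := by
    intro x hx
    rw [hgf, sdG_alt]
    have h1 := hfen (sdR d k q yhat E G x)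
    have h2 := sd_dot_le_abs_sum γ x.1 hx.1 (E.mulVec z₀)
    rw [← hMc] at h2
    linarith
  have hdnn : ∀ x ∈ sdS k d q p γ A, ∀ j, 0 ≤ x.2.2 j * (h j - (G.mulVec z₀) j) :=
    fun x hx j => mul_nonneg (hx.2.2 j) (by linarith [hGz₀ j])
  have hdsum : ∀ x ∈ sdS k d q p γ A,
      x.2.2 ⬝ᵥ (h - G.mulVec z₀) = ∑ j, x.2.2 j * (h j - (G.mulVec z₀) j) := by
    intro x hx; rfl
  set c₁ := B + (1/2) * (z₀ ⬝ᵥ V.mulVec z₀) + Mc - yhat ⬝ᵥ z₀ with hc₁def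
  have hc₁ : 0 ≤ c₁ := by
    have h1 := hlow x₀ hx₀S
    have h2 : x₀.2.2 ⬝ᵥ (h - G.mulVec z₀) = 0 := by simp [hx₀]
    rw [h2] at h1
    rw [hc₁def]; linarith
  have hlamle : ∀ x ∈ T, ∀ j, x.2.2 j * (h j - (G.mulVec z₀) j) ≤ c₁ := by
    intro x hx j
    have h1 := hlow x hx.1
    have h2 : x.2.2 j * (h j - (G.mulVec z₀) j) ≤ x.2.2 ⬝ᵥ (h - G.mulVec z₀) := by
      rw [hdsum x hx.1]
      exact Finset.single_le_sum (fun j' _ => hdnn x hx.1 j') (Finset.mem_univ j)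
    have h3 : gf x ≤ B := hx.2
    rw [hc₁def]; linarith
  set CΛ := ∑ j, c₁ / (h j - (G.mulVec z₀) j) with hCΛdef
  have hCΛnn : ∀ j, 0 ≤ c₁ / (h j - (G.mulVec z₀) j) :=
    fun j => div_nonneg hc₁ (by linarith [hGz₀ j])
  have hCΛ0 : 0 ≤ CΛ := Finset.sum_nonneg fun j _ => hCΛnn j
  have hlamB : ∀ x ∈ T, ∀ j, x.2.2 j ≤ CΛ := by
    intro x hx j
    have h1 : x.2.2 j ≤ c₁ / (h j - (G.mulVec z₀) j) := by
      rw [le_div_iff₀ (by linarith [hGz₀ j])]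
      exact hlamle x hx j
    exact h1.trans (Finset.single_le_sum (fun j' _ => hCΛnn j') (Finset.mem_univ j))
  set B₁ := B - yhat ⬝ᵥ z₀ + Mc with hB₁def
  have hrq : ∀ x ∈ T, (1/2) * (sdR d k q yhat E G x ⬝ᵥ V⁻¹.mulVec (sdR d k q yhat E G x))
      - sdR d k q yhat E G x ⬝ᵥ z₀ ≤ B₁ := by
    intro x hx
    have h1 : gf x ≤ B := hx.2
    rw [hgf, sdG_alt] at h1
    have h2 := sd_dot_le_abs_sum γ x.1 hx.1.1 (E.mulVec z₀)
    rw [← hMc] at h2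
    have h3 : 0 ≤ x.2.2 ⬝ᵥ (h - G.mulVec z₀) := by
      rw [hdsum x hx.1]
      exact Finset.sum_nonneg fun j _ => hdnn x hx.1 j
    rw [hB₁def]; linarith
  set Z := ∑ jd, |z₀ jd| with hZdef
  have hZ0 : 0 ≤ Z := Finset.sum_nonneg fun _ _ => abs_nonneg _
  have hdZ : ∀ r : Fin d → ℝ, r ⬝ᵥ z₀ ≤ ‖r‖ * Z := by
    intro r
    rw [hZdef, Finset.mul_sum]
    refine Finset.sum_le_sum fun jd _ => ?_
    calc r jd * z₀ jd ≤ |r jd * z₀ jd| := le_abs_self _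
      _ = |r jd| * |z₀ jd| := abs_mul _ _
      _ ≤ ‖r‖ * |z₀ jd| := by
          refine mul_le_mul_of_nonneg_right ?_ (abs_nonneg _)
          simpa using norm_le_pi_norm r jd
  set Rb := (2 * Z + m + 2 * |B₁|) / m with hRbdef
  have hRb0 : 0 ≤ Rb := by
    rw [hRbdef]
    exact div_nonneg (by positivity) hm.le
  have hrnB : ∀ x ∈ T, ‖sdR d k q yhat E G x‖ ≤ Rb := by
    intro x hx
    have h1 := hmW (sdR d k q yhat E G x)
    have h2 := hrq x hx
    have h3 := hdZ (sdR d k q yhat E G x)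
    refine sd_tbound m _ Z B₁ hm (norm_nonneg _) hZ0 ?_
    nlinarith
  set CE := ∑ i, ∑ jd, |E i jd| with hCEdef
  set CG := ∑ j, ∑ jd, |G j jd| with hCGdef
  set Cs := ‖yhat‖ + γ * CE + CΛ * CG + Rb with hCsdef
  have hsB : ∀ x ∈ T, ∀ jd, |x.2.1 jd| ≤ Cs := by
    intro x hx jd
    have hxeq : x.2.1 jd = yhat jd - (Eᵀ.mulVec x.1) jd - (Gᵀ.mulVec x.2.2) jd
        - (sdR d k q yhat E G x) jd := by
      simp only [sdR, Pi.sub_apply]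
      ring
    have e1 : |yhat jd| ≤ ‖yhat‖ := by simpa using norm_le_pi_norm yhat jd
    have e2 : |(Eᵀ.mulVec x.1) jd| ≤ γ * CE := by
      have h1 : (Eᵀ.mulVec x.1) jd = ∑ i, E i jd * x.1 i := by
        simp [Matrix.mulVec, dotProduct, Matrix.transpose_apply, mul_comm]
      rw [h1]
      calc |∑ i, E i jd * x.1 i| ≤ ∑ i, |E i jd * x.1 i| := Finset.abs_sum_le_sum_abs _ _
        _ ≤ ∑ i, |E i jd| * γ := by
            refine Finset.sum_le_sum fun i _ => ?_
            rw [abs_mul]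
            exact mul_le_mul_of_nonneg_left (hx.1.1 i) (abs_nonneg _)
        _ = (∑ i, |E i jd|) * γ := by rw [← Finset.sum_mul]
        _ ≤ CE * γ := by
            refine mul_le_mul_of_nonneg_right ?_ hγ
            rw [hCEdef]
            exact Finset.sum_le_sum fun i _ =>
              Finset.single_le_sum (fun jd' _ => abs_nonneg (E i jd')) (Finset.mem_univ jd)
        _ = γ * CE := mul_comm _ _
    have e3 : |(Gᵀ.mulVec x.2.2) jd| ≤ CΛ * CG := by
      have h1 : (Gᵀ.mulVec x.2.2) jd = ∑ j, G j jd * x.2.2 j := by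
        simp [Matrix.mulVec, dotProduct, Matrix.transpose_apply, mul_comm]
      rw [h1]
      calc |∑ j, G j jd * x.2.2 j| ≤ ∑ j, |G j jd * x.2.2 j| := Finset.abs_sum_le_sum_abs _ _
        _ ≤ ∑ j, |G j jd| * CΛ := by
            refine Finset.sum_le_sum fun j _ => ?_
            rw [abs_mul, abs_of_nonneg (hx.1.2.2 j)]
            exact mul_le_mul_of_nonneg_left (hlamB x hx j) (abs_nonneg _)
        _ = (∑ j, |G j jd|) * CΛ := by rw [← Finset.sum_mul]
        _ ≤ CG * CΛ := by
            refine mul_le_mul_of_nonneg_right ?_ hCΛ0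
            rw [hCGdef]
            exact Finset.sum_le_sum fun j _ =>
              Finset.single_le_sum (fun jd' _ => abs_nonneg (G j jd')) (Finset.mem_univ jd)
        _ = CΛ * CG := mul_comm _ _
    have e4 : |(sdR d k q yhat E G x) jd| ≤ Rb := by
      refine le_trans ?_ (hrnB x hx)
      simpa using norm_le_pi_norm (sdR d k q yhat E G x) jd
    rw [hxeq, hCsdef, abs_le]
    constructor
    · have := neg_abs_le (yhat jd)
      have := le_abs_self ((Eᵀ.mulVec x.1) jd)
      have := le_abs_self ((Gᵀ.mulVec x.2.2) jd)
      have := le_abs_self ((sdR d k q yhat E G x) jd)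
      linarith
    · have := le_abs_self (yhat jd)
      have := neg_abs_le ((Eᵀ.mulVec x.1) jd)
      have := neg_abs_le ((Gᵀ.mulVec x.2.2) jd)
      have := neg_abs_le ((sdR d k q yhat E G x) jd)
      linarith
  have hCs0 : 0 ≤ Cs := by
    rw [hCsdef]
    have hCE0 : 0 ≤ CE := Finset.sum_nonneg fun _ _ => Finset.sum_nonneg fun _ _ => abs_nonneg _
    have hCG0 : 0 ≤ CG := Finset.sum_nonneg fun _ _ => Finset.sum_nonneg fun _ _ => abs_nonneg _
    have := norm_nonneg yhat
    nlinarith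
  -- boundedness
  have hTbdd : Bornology.IsBounded T := by
    rw [isBounded_iff_forall_norm_le]
    refine ⟨max γ (max Cs CΛ), fun x hx => ?_⟩
    have hn : ‖x‖ = max ‖x.1‖ (max ‖x.2.1‖ ‖x.2.2‖) := by
      rw [Prod.norm_def, Prod.norm_def]
    rw [hn]
    refine max_le ?_ (max_le ?_ ?_)
    · refine le_trans ?_ (le_max_left _ _)
      rw [pi_norm_le_iff_of_nonneg hγ]
      intro i; simpa using hx.1.1 i
    · refine le_trans ?_ ((le_max_left _ _).trans (le_max_right _ _))
      rw [pi_norm_le_iff_of_nonneg hCs0]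
      intro jd; simpa using hsB x hx jd
    · refine le_trans ?_ ((le_max_right _ _).trans (le_max_right _ _))
      rw [pi_norm_le_iff_of_nonneg hCΛ0]
      intro j
      simp only [Real.norm_eq_abs, abs_of_nonneg (hx.1.2.2 j)]
      exact hlamB x hx j
  -- closedness
  have hSclosed : IsClosed (sdS k d q p γ A) := by
    have h1 : IsClosed {x : (Fin k → ℝ) × (Fin d → ℝ) × (Fin q → ℝ) | ∀ i, |x.1 i| ≤ γ} := by
      have : {x : (Fin k → ℝ) × (Fin d → ℝ) × (Fin q → ℝ) | ∀ i, |x.1 i| ≤ γ}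
          = ⋂ i, {x | |x.1 i| ≤ γ} := by ext x; simp
      rw [this]
      exact isClosed_iInter fun i =>
        isClosed_le (((continuous_apply i).comp continuous_fst).abs) continuous_const
    have h2 : IsClosed {x : (Fin k → ℝ) × (Fin d → ℝ) × (Fin q → ℝ) |
        x.2.1 ∈ LinearMap.range (Matrix.mulVecLin Aᵀ)} := by
      have hc : IsClosed ((LinearMap.range (Matrix.mulVecLin Aᵀ) : Submodule ℝ (Fin d → ℝ)) :
          Set (Fin d → ℝ)) := Submodule.closed_of_finiteDimensional _
      exact hc.preimage (continuous_fst.comp continuous_snd)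
    have h3 : IsClosed {x : (Fin k → ℝ) × (Fin d → ℝ) × (Fin q → ℝ) | ∀ j, 0 ≤ x.2.2 j} := by
      have : {x : (Fin k → ℝ) × (Fin d → ℝ) × (Fin q → ℝ) | ∀ j, 0 ≤ x.2.2 j}
          = ⋂ j, {x | 0 ≤ x.2.2 j} := by ext x; simp
      rw [this]
      exact isClosed_iInter fun j =>
        isClosed_le continuous_const ((continuous_apply j).comp (continuous_snd.comp continuous_snd))
    have : sdS k d q p γ A = {x : (Fin k → ℝ) × (Fin d → ℝ) × (Fin q → ℝ) | ∀ i, |x.1 i| ≤ γ}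
        ∩ ({x | x.2.1 ∈ LinearMap.range (Matrix.mulVecLin Aᵀ)} ∩ {x | ∀ j, 0 ≤ x.2.2 j}) := by
      ext x; simp [sdS]
    rw [this]
    exact h1.inter (h2.inter h3)
  have hTclosed : IsClosed T := hSclosed.inter (isClosed_le hcont continuous_const)
  have hTcompact : IsCompact T := Metric.isCompact_of_isClosed_isBounded hTclosed hTbdd
  have hTne : T.Nonempty := ⟨x₀, hx₀S, hB.ge⟩
  obtain ⟨xs, hxsT, hxsmin⟩ := hTcompact.exists_isMinOn hTne hcont.continuousOn
  refine ⟨xs, hxsT.1, fun x hxS => ?_⟩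
  by_cases hxB : gf x ≤ B
  · exact isMinOn_iff.mp hxsmin x ⟨hxS, hxB⟩
  · have h1 : gf xs ≤ B := hxsT.2
    push_neg at hxB
    linarith

lemma sd_weak (d k p q : ℕ) (yhat : Fin d → ℝ) (V : Matrix (Fin d) (Fin d) ℝ)
    (hV : V.PosDef) (E : Matrix (Fin k) (Fin d) ℝ) (γ : ℝ)
    (A : Matrix (Fin p) (Fin d) ℝ) (b : Fin p → ℝ)
    (G : Matrix (Fin q) (Fin d) ℝ) (h : Fin q → ℝ)
    (z : Fin d → ℝ) (hAz : A.mulVec z = b) (hGz : ∀ j, (G.mulVec z) j ≤ h j)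
    (v : Fin k → ℝ) (η : Fin p → ℝ) (lam : Fin q → ℝ)
    (hv : ∀ i, |v i| ≤ γ) (hlam : ∀ j, 0 ≤ lam j) :
    0 ≤ (-(yhat ⬝ᵥ z) + (1 / 2) * (z ⬝ᵥ V.mulVec z) + γ * ∑ i, |(E.mulVec z) i|)
      + ((1 / 2) * ((yhat - Eᵀ.mulVec v - Aᵀ.mulVec η - Gᵀ.mulVec lam) ⬝ᵥ
          V⁻¹.mulVec (yhat - Eᵀ.mulVec v - Aᵀ.mulVec η - Gᵀ.mulVec lam))
        + η ⬝ᵥ b + lam ⬝ᵥ h) := by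
  have h1 := sd_fenchel V hV z (yhat - Eᵀ.mulVec v - Aᵀ.mulVec η - Gᵀ.mulVec lam)
  have h2 : v ⬝ᵥ (E.mulVec z) ≤ γ * ∑ i, |(E.mulVec z) i| :=
    sd_dot_le_abs_sum γ v hv (E.mulVec z)
  have h3 : lam ⬝ᵥ (G.mulVec z) ≤ lam ⬝ᵥ h :=
    Finset.sum_le_sum fun j _ => mul_le_mul_of_nonneg_left (hGz j) (hlam j)
  have h4 : (Aᵀ.mulVec η) ⬝ᵥ z = η ⬝ᵥ b := by rw [sd_dot_transpose, hAz]
  have h5 : (yhat - Eᵀ.mulVec v - Aᵀ.mulVec η - Gᵀ.mulVec lam) ⬝ᵥ z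
      = yhat ⬝ᵥ z - v ⬝ᵥ (E.mulVec z) - (Aᵀ.mulVec η) ⬝ᵥ z - lam ⬝ᵥ (G.mulVec z) := by
    rw [sub_dotProduct, sub_dotProduct, sub_dotProduct,
      sd_dot_transpose E, sd_dot_transpose G]
  rw [h5, h4] at h1
  linarith

lemma sd_single_dot {n : ℕ} (i : Fin n) (c : ℝ) (v : Fin n → ℝ) :
    (Pi.single i c) ⬝ᵥ v = c * v i := by
  simp [dotProduct, Pi.single_apply, Finset.sum_ite_eq]

lemma sd_single_nonneg {n : ℕ} (i : Fin n) {c : ℝ} (hc : 0 ≤ c) (j : Fin n) :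
    0 ≤ (Pi.single i c : Fin n → ℝ) j := by
  rcases eq_or_ne j i with rfl | hne
  · simpa using hc
  · simp [Pi.single_eq_of_ne hne]


/-- Strong duality for the constrained L1-penalized QP under Slater's
condition: if there exists `z₀` with `Az₀ = b` and `Gz₀ < h` componentwise, then the primal
infimum of `−ŷᵀz + ½ zᵀVz + γ‖Ez‖₁` over `{z : Az = b, Gz ≤ h}` and the dual infimum of
`½ rᵀV⁻¹r + ηᵀb + λᵀh` (with `r = ŷ − Eᵀv − Aᵀη − Gᵀλ`) over
`{(v, η, λ) : ‖v‖_∞ ≤ γ, λ ≥ 0}` are both attained, and the primal optimal value equals the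
negative of the dual optimal value. -/
theorem stmt11 (d k p q : ℕ) (yhat : Fin d → ℝ)
    (V : Matrix (Fin d) (Fin d) ℝ) (hV : V.PosDef)
    (E : Matrix (Fin k) (Fin d) ℝ) (γ : ℝ) (hγ : 0 ≤ γ)
    (A : Matrix (Fin p) (Fin d) ℝ) (b : Fin p → ℝ)
    (G : Matrix (Fin q) (Fin d) ℝ) (h : Fin q → ℝ)
    (hslater : ∃ z₀ : Fin d → ℝ, A.mulVec z₀ = b ∧ ∀ j, (G.mulVec z₀) j < h j) :
    ∃ zstar : Fin d → ℝ, ∃ vstar : Fin k → ℝ, ∃ ηstar : Fin p → ℝ, ∃ lamstar : Fin q → ℝ,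
      (A.mulVec zstar = b ∧ ∀ j, (G.mulVec zstar) j ≤ h j) ∧
      (∀ i, |vstar i| ≤ γ) ∧ (∀ j, 0 ≤ lamstar j) ∧
      (∀ z : Fin d → ℝ, A.mulVec z = b → (∀ j, (G.mulVec z) j ≤ h j) →
        -(yhat ⬝ᵥ zstar) + (1 / 2) * (zstar ⬝ᵥ V.mulVec zstar) +
            γ * ∑ i, |(E.mulVec zstar) i| ≤
          -(yhat ⬝ᵥ z) + (1 / 2) * (z ⬝ᵥ V.mulVec z) + γ * ∑ i, |(E.mulVec z) i|) ∧
      (∀ (v : Fin k → ℝ) (η : Fin p → ℝ) (lam : Fin q → ℝ),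
        (∀ i, |v i| ≤ γ) → (∀ j, 0 ≤ lam j) →
        (1 / 2) * ((yhat - Eᵀ.mulVec vstar - Aᵀ.mulVec ηstar - Gᵀ.mulVec lamstar) ⬝ᵥ
            V⁻¹.mulVec (yhat - Eᵀ.mulVec vstar - Aᵀ.mulVec ηstar - Gᵀ.mulVec lamstar)) +
            ηstar ⬝ᵥ b + lamstar ⬝ᵥ h ≤
          (1 / 2) * ((yhat - Eᵀ.mulVec v - Aᵀ.mulVec η - Gᵀ.mulVec lam) ⬝ᵥ
            V⁻¹.mulVec (yhat - Eᵀ.mulVec v - Aᵀ.mulVec η - Gᵀ.mulVec lam)) +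
            η ⬝ᵥ b + lam ⬝ᵥ h) ∧
      -(yhat ⬝ᵥ zstar) + (1 / 2) * (zstar ⬝ᵥ V.mulVec zstar) +
          γ * ∑ i, |(E.mulVec zstar) i| =
        -((1 / 2) * ((yhat - Eᵀ.mulVec vstar - Aᵀ.mulVec ηstar - Gᵀ.mulVec lamstar) ⬝ᵥ
            V⁻¹.mulVec (yhat - Eᵀ.mulVec vstar - Aᵀ.mulVec ηstar - Gᵀ.mulVec lamstar)) +
          ηstar ⬝ᵥ b + lamstar ⬝ᵥ h) := by
  classical
  obtain ⟨z₀, hAz₀, hGz₀⟩ := hslater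
  have hdet : IsUnit V.det := isUnit_iff_ne_zero.mpr hV.det_pos.ne'
  have hW : (V⁻¹).PosDef := hV.inv
  have hWs : (V⁻¹)ᵀ = V⁻¹ := sd_symm hW.1
  have hVs : Vᵀ = V := sd_symm hV.1
  obtain ⟨xs, hxsS, hxsmin⟩ := sd_exists_min d k p q yhat V hV E γ hγ A G h z₀ hGz₀
  set rs := sdR d k q yhat E G xs with hrsdef
  set zs := V⁻¹.mulVec rs with hzsdef
  have hVzs : V.mulVec zs = rs := by
    rw [hzsdef, Matrix.mulVec_mulVec, Matrix.mul_nonsing_inv V hdet, Matrix.one_mulVec]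
  -- first-order conditions
  have hfo : ∀ (w : (Fin k → ℝ) × (Fin d → ℝ) × (Fin q → ℝ)) (ε : ℝ), 0 < ε →
      (∀ t : ℝ, 0 < t → t ≤ ε → (xs + t • w) ∈ sdS k d q p γ A) →
      0 ≤ zs ⬝ᵥ sdR0 d k q E G w + w.2.1 ⬝ᵥ z₀ + w.2.2 ⬝ᵥ h := by
    intro w ε hε hmem
    have hQ : 0 ≤ (1/2) * (sdR0 d k q E G w ⬝ᵥ V⁻¹.mulVec (sdR0 d k q E G w)) := by
      have := sd_posdef_nonneg hW (sdR0 d k q E G w); linarith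
    have hL : (V⁻¹.mulVec rs) ⬝ᵥ sdR0 d k q E G w = zs ⬝ᵥ sdR0 d k q E G w := by
      rw [hzsdef]
    refine sd_oneSided _ _ ε hQ hε fun t ht htε => ?_
    have h1 := hxsmin _ (hmem t ht htε)
    rw [sdG_expand d k q yhat E G V⁻¹ hWs z₀ h xs w t, ← hrsdef] at h1
    have h2 : (V⁻¹.mulVec rs) ⬝ᵥ sdR0 d k q E G w + w.2.1 ⬝ᵥ z₀ + w.2.2 ⬝ᵥ h
        = zs ⬝ᵥ sdR0 d k q E G w + w.2.1 ⬝ᵥ z₀ + w.2.2 ⬝ᵥ h := by rw [hL]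
    rw [h2] at h1
    linarith
  -- membership helpers
  have hmemA : ∀ (u : Fin p → ℝ) (t : ℝ), 0 < t → t ≤ 1 →
      (xs + t • ((0 : Fin k → ℝ), Aᵀ.mulVec u, (0 : Fin q → ℝ))) ∈ sdS k d q p γ A := by
    intro u t ht _
    refine ⟨fun i => ?_, ?_, fun j => ?_⟩
    · have he : (xs + t • ((0 : Fin k → ℝ), Aᵀ.mulVec u, (0 : Fin q → ℝ))).1 i = xs.1 i := by
        simp
      rw [he]; exact hxsS.1 i
    · have he : (xs + t • ((0 : Fin k → ℝ), Aᵀ.mulVec u, (0 : Fin q → ℝ))).2.1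
          = xs.2.1 + t • Aᵀ.mulVec u := by simp
      rw [he]
      exact Submodule.add_mem _ hxsS.2.1
        (Submodule.smul_mem _ t ⟨u, by rw [Matrix.mulVecLin_apply]⟩)
    · have he : (xs + t • ((0 : Fin k → ℝ), Aᵀ.mulVec u, (0 : Fin q → ℝ))).2.2 j
          = xs.2.2 j := by simp
      rw [he]; exact hxsS.2.2 j
  have hAdir : ∀ u : Fin p → ℝ,
      zs ⬝ᵥ sdR0 d k q E G ((0 : Fin k → ℝ), Aᵀ.mulVec u, (0 : Fin q → ℝ))
        + (Aᵀ.mulVec u) ⬝ᵥ z₀ + (0 : Fin q → ℝ) ⬝ᵥ h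
      = u ⬝ᵥ (A.mulVec z₀) - u ⬝ᵥ (A.mulVec zs) := by
    intro u
    have h1 : sdR0 d k q E G ((0 : Fin k → ℝ), Aᵀ.mulVec u, (0 : Fin q → ℝ))
        = -(Aᵀ.mulVec u) := by
      simp [sdR0]
    rw [h1, dotProduct_neg, zero_dotProduct, add_zero,
      dotProduct_comm zs, sd_dot_transpose, sd_dot_transpose]
    ring
  have hAzs : A.mulVec zs = b := by
    have key : ∀ u : Fin p → ℝ, 0 ≤ u ⬝ᵥ (A.mulVec z₀) - u ⬝ᵥ (A.mulVec zs) := by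
      intro u
      have h1 := hfo ((0 : Fin k → ℝ), Aᵀ.mulVec u, (0 : Fin q → ℝ)) 1 one_pos (hmemA u)
      rw [hAdir u] at h1
      exact h1
    have h2 : (A.mulVec z₀ - A.mulVec zs) ⬝ᵥ (A.mulVec z₀ - A.mulVec zs) = 0 := by
      have ha := key (A.mulVec z₀ - A.mulVec zs)
      have hb := key (-(A.mulVec z₀ - A.mulVec zs))
      rw [neg_dotProduct, neg_dotProduct] at hb
      have hc : (A.mulVec z₀ - A.mulVec zs) ⬝ᵥ (A.mulVec z₀ - A.mulVec zs)
          = (A.mulVec z₀ - A.mulVec zs) ⬝ᵥ (A.mulVec z₀)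
            - (A.mulVec z₀ - A.mulVec zs) ⬝ᵥ (A.mulVec zs) :=
        dotProduct_sub _ _ _
      linarith
    have h3 : A.mulVec z₀ - A.mulVec zs = 0 := dotProduct_self_eq_zero.mp h2
    have h4 : A.mulVec zs = A.mulVec z₀ := by
      have := sub_eq_zero.mp h3
      exact this.symm
    rw [h4, hAz₀]
  have hGdir : ∀ (j : Fin q) (c : ℝ),
      zs ⬝ᵥ sdR0 d k q E G ((0 : Fin k → ℝ), (0 : Fin d → ℝ), Pi.single j c)
        + (0 : Fin d → ℝ) ⬝ᵥ z₀ + (Pi.single j c : Fin q → ℝ) ⬝ᵥ h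
      = c * (h j - (G.mulVec zs) j) := by
    intro j c
    have h1 : sdR0 d k q E G ((0 : Fin k → ℝ), (0 : Fin d → ℝ), Pi.single j c)
        = -(Gᵀ.mulVec (Pi.single j c)) := by
      simp [sdR0]
    rw [h1, dotProduct_neg, zero_dotProduct, add_zero,
      dotProduct_comm zs, sd_dot_transpose, sd_single_dot, sd_single_dot]
    ring
  have hGzs : ∀ j, (G.mulVec zs) j ≤ h j := by
    intro j
    have hmem : ∀ t : ℝ, 0 < t → t ≤ 1 →
        (xs + t • ((0 : Fin k → ℝ), (0 : Fin d → ℝ), (Pi.single j 1 : Fin q → ℝ)))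
          ∈ sdS k d q p γ A := by
      intro t ht _
      refine ⟨fun i => ?_, ?_, fun j' => ?_⟩
      · have he : (xs + t • ((0 : Fin k → ℝ), (0 : Fin d → ℝ),
            (Pi.single j 1 : Fin q → ℝ))).1 i = xs.1 i := by simp
        rw [he]; exact hxsS.1 i
      · have he : (xs + t • ((0 : Fin k → ℝ), (0 : Fin d → ℝ),
            (Pi.single j 1 : Fin q → ℝ))).2.1 = xs.2.1 := by simp
        rw [he]; exact hxsS.2.1
      · have he : (xs + t • ((0 : Fin k → ℝ), (0 : Fin d → ℝ),
            (Pi.single j 1 : Fin q → ℝ))).2.2 j'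
            = xs.2.2 j' + t * (Pi.single j 1 : Fin q → ℝ) j' := by
          simp [mul_comm]
        rw [he]
        have := sd_single_nonneg j (zero_le_one) j'
        nlinarith [hxsS.2.2 j']
    have h1 := hfo ((0 : Fin k → ℝ), (0 : Fin d → ℝ), (Pi.single j 1 : Fin q → ℝ))
      1 one_pos hmem
    rw [hGdir j 1] at h1
    linarith
  have hcs : ∀ j, xs.2.2 j * (h j - (G.mulVec zs) j) = 0 := by
    intro j
    rcases eq_or_lt_of_le (hxsS.2.2 j) with hj | hj
    · rw [← hj]; ring
    · have hmem : ∀ t : ℝ, 0 < t → t ≤ xs.2.2 j →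
          (xs + t • ((0 : Fin k → ℝ), (0 : Fin d → ℝ), (Pi.single j (-1) : Fin q → ℝ)))
            ∈ sdS k d q p γ A := by
        intro t ht htle
        refine ⟨fun i => ?_, ?_, fun j' => ?_⟩
        · have he : (xs + t • ((0 : Fin k → ℝ), (0 : Fin d → ℝ),
              (Pi.single j (-1) : Fin q → ℝ))).1 i = xs.1 i := by simp
          rw [he]; exact hxsS.1 i
        · have he : (xs + t • ((0 : Fin k → ℝ), (0 : Fin d → ℝ),
              (Pi.single j (-1) : Fin q → ℝ))).2.1 = xs.2.1 := by simp
          rw [he]; exact hxsS.2.1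
        · have he : (xs + t • ((0 : Fin k → ℝ), (0 : Fin d → ℝ),
              (Pi.single j (-1) : Fin q → ℝ))).2.2 j'
              = xs.2.2 j' + t * (Pi.single j (-1) : Fin q → ℝ) j' := by
            simp [mul_comm]
          rw [he]
          rcases eq_or_ne j' j with rfl | hne
          · simp only [Pi.single_eq_same]
            linarith
          · rw [Pi.single_eq_of_ne hne]
            have := hxsS.2.2 j'
            linarith
      have h1 := hfo ((0 : Fin k → ℝ), (0 : Fin d → ℝ), (Pi.single j (-1) : Fin q → ℝ))
        (xs.2.2 j) hj hmem
      rw [hGdir j (-1)] at h1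
      have h2 : h j ≤ (G.mulVec zs) j := by linarith
      have h4 : (G.mulVec zs) j = h j := le_antisymm (hGzs j) h2
      rw [h4]; ring
  have hEdir : ∀ (i : Fin k) (c : ℝ),
      zs ⬝ᵥ sdR0 d k q E G ((Pi.single i c : Fin k → ℝ), (0 : Fin d → ℝ), (0 : Fin q → ℝ))
        + (0 : Fin d → ℝ) ⬝ᵥ z₀ + (0 : Fin q → ℝ) ⬝ᵥ h
      = -(c * (E.mulVec zs) i) := by
    intro i c
    have h1 : sdR0 d k q E G ((Pi.single i c : Fin k → ℝ), (0 : Fin d → ℝ), (0 : Fin q → ℝ))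
        = -(Eᵀ.mulVec (Pi.single i c)) := by
      simp [sdR0]
    rw [h1, dotProduct_neg, zero_dotProduct, zero_dotProduct,
      add_zero, add_zero, dotProduct_comm zs, sd_dot_transpose, sd_single_dot]
  have hmemE : ∀ (i : Fin k) (c : ℝ), |c| = 1 → ∀ t : ℝ, 0 < t →
      (∀ i', |xs.1 i' + t * (Pi.single i c : Fin k → ℝ) i'| ≤ γ) →
      (xs + t • ((Pi.single i c : Fin k → ℝ), (0 : Fin d → ℝ), (0 : Fin q → ℝ)))
        ∈ sdS k d q p γ A := by
    intro i c _ t _ habs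
    refine ⟨fun i' => ?_, ?_, fun j' => ?_⟩
    · have he : (xs + t • ((Pi.single i c : Fin k → ℝ), (0 : Fin d → ℝ),
          (0 : Fin q → ℝ))).1 i' = xs.1 i' + t * (Pi.single i c : Fin k → ℝ) i' := by
        simp [mul_comm]
      rw [he]; exact habs i'
    · have he : (xs + t • ((Pi.single i c : Fin k → ℝ), (0 : Fin d → ℝ),
          (0 : Fin q → ℝ))).2.1 = xs.2.1 := by simp
      rw [he]; exact hxsS.2.1
    · have he : (xs + t • ((Pi.single i c : Fin k → ℝ), (0 : Fin d → ℝ),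
          (0 : Fin q → ℝ))).2.2 j' = xs.2.2 j' := by simp
      rw [he]; exact hxsS.2.2 j'
  have hvE : ∀ i, xs.1 i * (E.mulVec zs) i = γ * |(E.mulVec zs) i| := by
    intro i
    have hvi := abs_le.mp (hxsS.1 i)
    have hup : xs.1 i < γ → (E.mulVec zs) i ≤ 0 := by
      intro hlt
      have hmem : ∀ t : ℝ, 0 < t → t ≤ γ - xs.1 i →
          (xs + t • ((Pi.single i 1 : Fin k → ℝ), (0 : Fin d → ℝ), (0 : Fin q → ℝ)))
            ∈ sdS k d q p γ A := by
        intro t ht htle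
        refine hmemE i 1 (abs_one) t ht fun i' => ?_
        rcases eq_or_ne i' i with rfl | hne
        · rw [Pi.single_eq_same, abs_le]
          constructor <;> [linarith [hvi.1]; linarith]
        · rw [Pi.single_eq_of_ne hne]
          simpa using hxsS.1 i'
      have h1 := hfo ((Pi.single i 1 : Fin k → ℝ), (0 : Fin d → ℝ), (0 : Fin q → ℝ))
        (γ - xs.1 i) (by linarith) hmem
      rw [hEdir i 1] at h1
      linarith
    have hdn : -γ < xs.1 i → 0 ≤ (E.mulVec zs) i := by
      intro hlt
      have hmem : ∀ t : ℝ, 0 < t → t ≤ xs.1 i + γ →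
          (xs + t • ((Pi.single i (-1) : Fin k → ℝ), (0 : Fin d → ℝ), (0 : Fin q → ℝ)))
            ∈ sdS k d q p γ A := by
        intro t ht htle
        refine hmemE i (-1) (by norm_num) t ht fun i' => ?_
        rcases eq_or_ne i' i with rfl | hne
        · rw [Pi.single_eq_same, abs_le]
          constructor <;> [linarith; linarith [hvi.2]]
        · rw [Pi.single_eq_of_ne hne]
          simpa using hxsS.1 i'
      have h1 := hfo ((Pi.single i (-1) : Fin k → ℝ), (0 : Fin d → ℝ), (0 : Fin q → ℝ))
        (xs.1 i + γ) (by linarith) hmem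
      rw [hEdir i (-1)] at h1
      linarith
    rcases eq_or_lt_of_le hvi.2 with heq | hlt
    · rcases eq_or_lt_of_le hvi.1 with heq2 | hlt2
      · have hγ0 : γ = 0 := by linarith
        rw [heq, hγ0]
        simp
      · have h1 := hdn hlt2
        rw [heq, abs_of_nonneg h1]
    · have h1 := hup hlt
      rcases eq_or_lt_of_le hvi.1 with heq2 | hlt2
      · rw [← heq2, abs_of_nonpos h1]
        ring
      · have h2 := hdn hlt2
        have h3 : (E.mulVec zs) i = 0 := le_antisymm h1 h2
        rw [h3]
        simp
  obtain ⟨ηs, hηs⟩ := hxsS.2.1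
  rw [Matrix.mulVecLin_apply] at hηs
  have hrs_eq : yhat - Eᵀ.mulVec xs.1 - Aᵀ.mulVec ηs - Gᵀ.mulVec xs.2.2 = rs := by
    rw [hηs, hrsdef]; rfl
  -- value identity
  have hval : -(yhat ⬝ᵥ zs) + (1 / 2) * (zs ⬝ᵥ V.mulVec zs) + γ * ∑ i, |(E.mulVec zs) i|
      = -((1 / 2) * (rs ⬝ᵥ V⁻¹.mulVec rs) + ηs ⬝ᵥ b + xs.2.2 ⬝ᵥ h) := by
    have hsum : γ * ∑ i, |(E.mulVec zs) i| = xs.1 ⬝ᵥ (E.mulVec zs) := by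
      rw [Finset.mul_sum]
      show _ = ∑ i, xs.1 i * (E.mulVec zs) i
      exact Finset.sum_congr rfl fun i _ => (hvE i).symm
    have hd1 : ηs ⬝ᵥ b = xs.2.1 ⬝ᵥ zs := by
      rw [← hAzs, ← sd_dot_transpose, hηs]
    have hd2 : xs.2.2 ⬝ᵥ h = xs.2.2 ⬝ᵥ (G.mulVec zs) := by
      refine Finset.sum_congr rfl fun j _ => ?_
      have := hcs j
      nlinarith [hcs j]
    have hd3 : rs ⬝ᵥ V⁻¹.mulVec rs = zs ⬝ᵥ V.mulVec zs := by
      rw [← hzsdef, hVzs]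
      exact dotProduct_comm rs zs
    have hd4 : rs ⬝ᵥ zs = yhat ⬝ᵥ zs - xs.1 ⬝ᵥ (E.mulVec zs) - xs.2.1 ⬝ᵥ zs
        - xs.2.2 ⬝ᵥ (G.mulVec zs) := by
      rw [hrsdef]
      show (yhat - Eᵀ.mulVec xs.1 - xs.2.1 - Gᵀ.mulVec xs.2.2) ⬝ᵥ zs = _
      rw [sub_dotProduct, sub_dotProduct, sub_dotProduct,
        sd_dot_transpose E, sd_dot_transpose G]
    have hd5 : zs ⬝ᵥ V.mulVec zs = rs ⬝ᵥ zs := by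
      rw [hVzs, dotProduct_comm]
    rw [hsum, hd1, hd2, hd3]
    linarith
  refine ⟨zs, xs.1, ηs, xs.2.2, ⟨hAzs, hGzs⟩, hxsS.1, hxsS.2.2, ?_, ?_, ?_⟩
  · intro z hAz hGz
    have hwd := sd_weak d k p q yhat V hV E γ A b G h z hAz hGz xs.1 ηs xs.2.2
      hxsS.1 hxsS.2.2
    rw [hrs_eq] at hwd
    linarith
  · intro v η lam hv hlam
    have hwd := sd_weak d k p q yhat V hV E γ A b G h zs hAzs hGzs v η lam hv hlam
    rw [hrs_eq]
    linarith
  · rw [hrs_eq]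
    exact hval
end
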